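/- Let K = ℚ^cycl be the maximal cyclotomic extension of ℚ, let k = K(a, b, c) be the rational function field in three variables over K, and let L = k(√a) be the quadratic extension of k obtained by adjoining an element s with s² = a. Set ε₂ = ac(b−1)(a−bc), ε₃ = abc(1−b)(a−b²c), ε₄ = b(b²c−a)(bc−a). Then: (i) for every nonempty subset S of {bc, ε₂, ε₃}, the product of the elements of S is not a square in L (equivalently, the classes of bc, ε₂, ε₃ generate a subgroup of L^×/L^{×2} isomorphic to (ℤ/2ℤ)³); (ii) ε₂·ε₃·ε₄ is a square in L; consequently each of abc (which is equivalent to bc modulo squares in L), ε₂, ε₃, ε₄ is a nonsquare in L. -/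

import Mathlib

noncomputable section

/-- The rational function field `K(a, b, c)` in three variables over `K`. -/
abbrev RatFunc3 (K : Type) [Field K] : Type := FractionRing (MvPolynomial (Fin 3) K)

/-- The variable `a`. -/
def va (K : Type) [Field K] : RatFunc3 K :=
  algebraMap (MvPolynomial (Fin 3) K) (RatFunc3 K) (MvPolynomial.X 0)

/-- The variable `b`. -/
def vb (K : Type) [Field K] : RatFunc3 K :=
  algebraMap (MvPolynomial (Fin 3) K) (RatFunc3 K) (MvPolynomial.X 1)

/-- The variable `c`. -/
def vc (K : Type) [Field K] : RatFunc3 K :=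
  algebraMap (MvPolynomial (Fin 3) K) (RatFunc3 K) (MvPolynomial.X 2)

/-- `ε₂ = ac(b−1)(a−bc)`. -/
def eps2 (K : Type) [Field K] : RatFunc3 K :=
  va K * vc K * (vb K - 1) * (va K - vb K * vc K)

/-- `ε₃ = abc(1−b)(a−b²c)`. -/
def eps3 (K : Type) [Field K] : RatFunc3 K :=
  va K * vb K * vc K * (1 - vb K) * (va K - vb K ^ 2 * vc K)

/-- `ε₄ = b(b²c−a)(bc−a)`. -/
def eps4 (K : Type) [Field K] : RatFunc3 K :=
  vb K * (vb K ^ 2 * vc K - va K) * (vb K * vc K - va K)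

namespace SqAux

open Polynomial

abbrev R (K : Type) [Field K] := MvPolynomial (Fin 3) K

lemma nonsq_of_root {K : Type} [Field K] (f : K[X]) (r : K) (h0 : f.eval r = 0)
    (h1 : (derivative f).eval r ≠ 0) : ¬ IsSquare f := by
  rintro ⟨q, rfl⟩
  apply h1
  have hq : q.eval r = 0 := by
    have := h0
    rw [eval_mul, mul_self_eq_zero] at this
    exact this
  simp [derivative_mul, hq]

variable {K : Type} [Field K]

set_option synthInstance.maxHeartbeats 1000000 in
lemma nonsq_frac (f : R K) (h : ¬ IsSquare f) :
    ¬ IsSquare (algebraMap (R K) (RatFunc3 K) f) := by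
  rintro ⟨u, hu⟩
  have hint : IsIntegral (R K) u := by
    refine ⟨Polynomial.X ^ 2 - Polynomial.C f, Polynomial.monic_X_pow_sub_C f (by norm_num), ?_⟩
    simp [Polynomial.eval₂_sub, hu, sq]
  obtain ⟨r, hr⟩ := IsIntegrallyClosed.isIntegral_iff.mp hint
  apply h
  refine ⟨r, ?_⟩
  have : algebraMap (R K) (RatFunc3 K) f = algebraMap (R K) (RatFunc3 K) (r * r) := by
    rw [map_mul, hr]; exact hu
  exact IsFractionRing.injective (R K) (RatFunc3 K) this

def ψ₁ : R K →+* K[X] := (MvPolynomial.aeval ![1, Polynomial.X, 1]).toRingHom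
def ψ₂ : R K →+* K[X] := (MvPolynomial.aeval ![Polynomial.X, 2, 1]).toRingHom

lemma main_case (ψ : R K →+* K[X]) (P : R K) (r : K)
    (h0 : (ψ P).eval r = 0) (h1 : ((derivative (ψ P)).eval r) ≠ 0) :
    ¬ IsSquare (algebraMap (R K) (RatFunc3 K) P) :=
  nonsq_frac P (fun h => nonsq_of_root _ r h0 h1 (h.map ψ))

def A : R K := MvPolynomial.X 0
def B : R K := MvPolynomial.X 1
def Cc : R K := MvPolynomial.X 2

def E1 {K : Type} [Field K] : R K := B * Cc
def E2 {K : Type} [Field K] : R K := A * Cc * (B - 1) * (A - B * Cc)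
def E3 {K : Type} [Field K] : R K := A * B * Cc * (1 - B) * (A - B ^ 2 * Cc)
def E4 {K : Type} [Field K] : R K := B * (B ^ 2 * Cc - A) * (B * Cc - A)


variable (K) [Algebra ℚ K]
variable (L : Type) [Field L] [Algebra (RatFunc3 K) L] (s : L)

set_option maxHeartbeats 1000000 in
lemma nonsq_in_L (hs : s ^ 2 = algebraMap (RatFunc3 K) L (va K))
    (hrank : Module.finrank (RatFunc3 K) L = 2)
    (ha : ¬ IsSquare (va K))
    (g : RatFunc3 K) (h1 : ¬ IsSquare g) (h2 : ¬ IsSquare (va K * g)) :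
    ¬ IsSquare (algebraMap (RatFunc3 K) L g) := by
  haveI : CharZero K := charZero_of_injective_algebraMap (algebraMap ℚ K).injective
  haveI : CharZero (RatFunc3 K) := charZero_of_injective_algebraMap
    (IsFractionRing.injective (MvPolynomial (Fin 3) K) (RatFunc3 K))
  set F := algebraMap (RatFunc3 K) L with hF
  have hFinj : Function.Injective F := (algebraMap (RatFunc3 K) L).injective
  have li : LinearIndependent (RatFunc3 K) ![(1 : L), s] := by
    rw [LinearIndependent.pair_iff]
    intro c0 c1 h
    have h' : F c0 + F c1 * s = 0 := by
      simpa [Algebra.smul_def] using h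
    by_cases hc1 : c1 = 0
    · subst hc1
      simp only [map_zero, zero_mul, add_zero] at h'
      exact ⟨hFinj (by simpa using h'), rfl⟩
    · exfalso
      apply ha
      have key : va K * (c1 * c1) = c0 * c0 := hFinj (by
        simp only [map_mul]
        rw [← hs]
        linear_combination (F c1 * s - F c0) * h')
      refine ⟨c0 / c1, ?_⟩
      rw [div_mul_div_comm, eq_div_iff (mul_ne_zero hc1 hc1)]
      linear_combination key
  rintro ⟨u, hu⟩
  have hspan := li.span_eq_top_of_card_eq_finrank (by simp [hrank])
  have humem : u ∈ Submodule.span (RatFunc3 K) (Set.range ![(1:L), s]) := by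
    rw [hspan]; trivial
  have humem' : u ∈ Submodule.span (RatFunc3 K) ({(1:L), s} : Set L) := by
    convert humem using 2
    ext z
    simp only [Set.mem_insert_iff, Set.mem_singleton_iff, Set.mem_range, Fin.exists_fin_two,
      Matrix.cons_val_zero, Matrix.cons_val_one, Matrix.head_cons]
    tauto
  obtain ⟨x, y, hu'⟩ := Submodule.mem_span_pair.mp humem'
  rw [Algebra.smul_def, Algebra.smul_def] at hu'
  replace hu' : u = F x * 1 + F y * s := hu'.symm
  have e1 : F g = F (x*x) + F (va K * (y*y)) + F (2*x*y) * s := by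
    rw [hu, hu']
    simp only [map_mul, map_add, map_ofNat, mul_one]
    linear_combination (F y * F y) * hs
  have hz := li.eq_zero_of_pair (s := x*x + va K * (y*y) - g) (t := 2*x*y) (by
    rw [Algebra.smul_def, Algebra.smul_def, mul_one, map_sub, map_add]
    linear_combination -e1)
  obtain ⟨hA, hB⟩ := hz
  rcases mul_eq_zero.mp hB with h | h
  · rcases mul_eq_zero.mp h with h | h
    · exact absurd h two_ne_zero
    · apply h2
      refine ⟨va K * y, ?_⟩
      rw [h] at hA
      linear_combination (-(va K)) * hA
  · apply h1
    refine ⟨x, ?_⟩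
    rw [h] at hA
    linear_combination -hA

/-- One-stop lemma: a `k`-element equal to the image of a polynomial `P`,
with simple-root certificates for `P` and `A * P`, is a nonsquare in `L`. -/
lemma case_L (hs : s ^ 2 = algebraMap (RatFunc3 K) L (va K))
    (hrank : Module.finrank (RatFunc3 K) L = 2)
    (ha : ¬ IsSquare (va K))
    (g : RatFunc3 K) (P : R K)
    (hg : g = algebraMap (R K) (RatFunc3 K) P)
    (ψa ψb : R K →+* K[X]) (r1 r2 : K)
    (h0a : (ψa P).eval r1 = 0) (h1a : ((derivative (ψa P)).eval r1) ≠ 0)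
    (h0b : (ψb (A * P)).eval r2 = 0) (h1b : ((derivative (ψb (A * P))).eval r2) ≠ 0) :
    ¬ IsSquare (algebraMap (RatFunc3 K) L g) := by
  subst hg
  refine nonsq_in_L K L s hs hrank ha _ (main_case ψa P r1 h0a h1a) ?_
  have : va K * algebraMap (R K) (RatFunc3 K) P = algebraMap (R K) (RatFunc3 K) (A * P) := by
    rw [map_mul]; rfl
  rw [this]
  exact main_case ψb (A * P) r2 h0b h1b

end SqAux

set_option maxHeartbeats 2000000 in
open SqAux Polynomial in
theorem square_classes_over_L (K : Type) [Field K] [Algebra ℚ K]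
    [IsCyclotomicExtension Set.univ ℚ K]
    (L : Type) [Field L] [Algebra (RatFunc3 K) L] (s : L)
    (hs : s ^ 2 = algebraMap (RatFunc3 K) L (va K))
    (hrank : Module.finrank (RatFunc3 K) L = 2) :
    (∀ S : Finset (Fin 3), S.Nonempty →
      ¬ IsSquare (∏ i ∈ S,
        ![algebraMap (RatFunc3 K) L (vb K * vc K),
          algebraMap (RatFunc3 K) L (eps2 K),
          algebraMap (RatFunc3 K) L (eps3 K)] i)) ∧
    IsSquare (algebraMap (RatFunc3 K) L (eps2 K * eps3 K * eps4 K)) ∧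
    (∃ t : L, algebraMap (RatFunc3 K) L (va K * vb K * vc K) =
      t ^ 2 * algebraMap (RatFunc3 K) L (vb K * vc K)) ∧
    ¬ IsSquare (algebraMap (RatFunc3 K) L (va K * vb K * vc K)) ∧
    ¬ IsSquare (algebraMap (RatFunc3 K) L (eps2 K)) ∧
    ¬ IsSquare (algebraMap (RatFunc3 K) L (eps3 K)) ∧
    ¬ IsSquare (algebraMap (RatFunc3 K) L (eps4 K)) := by
  haveI : CharZero K := charZero_of_injective_algebraMap (algebraMap ℚ K).injective
  have ha : ¬ IsSquare (va K) := by
    rw [show va K = algebraMap (R K) (RatFunc3 K) (A : R K) from rfl]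
    exact main_case ψ₂ A 0 (by simp [ψ₂, A]) (by simp [ψ₂, A])
  refine ⟨?_, ?_, ?_, ?_, ?_, ?_, ?_⟩
  · -- part (i)
    intro S hS
    fin_cases S
    all_goals simp only [Finset.prod_mk, Multiset.map_coe, Multiset.prod_coe,
      List.map_cons, List.map_nil, List.prod_cons, List.prod_nil, mul_one,
      Matrix.cons_val_zero, Matrix.cons_val_one, Matrix.head_cons, Matrix.tail_cons,
      show (⟨0, by norm_num⟩ : Fin 3) = 0 from rfl, show (⟨1, by norm_num⟩ : Fin 3) = 1 from rfl,
      show (⟨2, by norm_num⟩ : Fin 3) = 2 from rfl,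
      show ((2 : Fin 3)) = Fin.succ 1 from rfl, Matrix.cons_val_succ]
    · exact absurd rfl hS.ne_empty
    · exact case_L K L s hs hrank ha _ E1
        (by simp only [vb, vc, E1, B, Cc, map_mul]) ψ₁ ψ₁ 0 0
        (by simp [ψ₁, E1, A, B, Cc, derivative_mul] <;> norm_num)
        (by simp [ψ₁, E1, A, B, Cc, derivative_mul] <;> norm_num)
        (by simp [ψ₁, E1, A, B, Cc, derivative_mul] <;> norm_num)
        (by simp [ψ₁, E1, A, B, Cc, derivative_mul] <;> norm_num)
    · exact case_L K L s hs hrank ha _ E2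
        (by simp only [eps2, va, vb, vc, E2, A, B, Cc, map_mul, map_sub, map_one])
        ψ₂ ψ₂ 0 2
        (by simp [ψ₂, E2, A, B, Cc, derivative_mul, derivative_sub] <;> norm_num)
        (by simp [ψ₂, E2, A, B, Cc, derivative_mul, derivative_sub] <;> norm_num)
        (by simp [ψ₂, E2, A, B, Cc, derivative_mul, derivative_sub] <;> norm_num)
        (by simp [ψ₂, E2, A, B, Cc, derivative_mul, derivative_sub] <;> norm_num)
    · rw [← map_mul]
      exact case_L K L s hs hrank ha _ (E1 * E2)
        (by simp only [eps2, va, vb, vc, E1, E2, A, B, Cc, map_mul, map_sub, map_one])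
        ψ₂ ψ₂ 0 2
        (by simp [ψ₂, E1, E2, A, B, Cc, derivative_mul, derivative_sub] <;> norm_num)
        (by simp [ψ₂, E1, E2, A, B, Cc, derivative_mul, derivative_sub] <;> norm_num)
        (by simp [ψ₂, E1, E2, A, B, Cc, derivative_mul, derivative_sub] <;> norm_num)
        (by simp [ψ₂, E1, E2, A, B, Cc, derivative_mul, derivative_sub] <;> norm_num)
    · exact case_L K L s hs hrank ha _ E3
        (by simp only [eps3, va, vb, vc, E3, A, B, Cc, map_mul, map_sub, map_one, map_pow])
        ψ₂ ψ₂ 0 4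
        (by simp [ψ₂, E3, A, B, Cc, derivative_mul, derivative_sub] <;> norm_num)
        (by simp [ψ₂, E3, A, B, Cc, derivative_mul, derivative_sub] <;> norm_num)
        (by simp [ψ₂, E3, A, B, Cc, derivative_mul, derivative_sub] <;> norm_num)
        (by simp [ψ₂, E3, A, B, Cc, derivative_mul, derivative_sub] <;> norm_num)
    · rw [← map_mul]
      exact case_L K L s hs hrank ha _ (E1 * E3)
        (by simp only [eps3, va, vb, vc, E1, E3, A, B, Cc, map_mul, map_sub, map_one, map_pow])
        ψ₂ ψ₂ 0 4
        (by simp [ψ₂, E1, E3, A, B, Cc, derivative_mul, derivative_sub] <;> norm_num)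
        (by simp [ψ₂, E1, E3, A, B, Cc, derivative_mul, derivative_sub] <;> norm_num)
        (by simp [ψ₂, E1, E3, A, B, Cc, derivative_mul, derivative_sub] <;> norm_num)
        (by simp [ψ₂, E1, E3, A, B, Cc, derivative_mul, derivative_sub] <;> norm_num)
    · rw [← map_mul]
      exact case_L K L s hs hrank ha _ (E2 * E3)
        (by simp only [eps2, eps3, va, vb, vc, E2, E3, A, B, Cc, map_mul, map_sub, map_one,
          map_pow])
        ψ₂ ψ₂ 2 2
        (by simp [ψ₂, E2, E3, A, B, Cc, derivative_mul, derivative_sub] <;> norm_num)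
        (by simp [ψ₂, E2, E3, A, B, Cc, derivative_mul, derivative_sub] <;> norm_num)
        (by simp [ψ₂, E2, E3, A, B, Cc, derivative_mul, derivative_sub] <;> norm_num)
        (by simp [ψ₂, E2, E3, A, B, Cc, derivative_mul, derivative_sub] <;> norm_num)
    · rw [← map_mul, ← map_mul]
      exact case_L K L s hs hrank ha _ (E1 * (E2 * E3))
        (by simp only [eps2, eps3, vb, vc, va, E1, E2, E3, A, B, Cc, map_mul, map_sub, map_one,
          map_pow])
        ψ₂ ψ₂ 2 2
        (by simp [ψ₂, E1, E2, E3, A, B, Cc, derivative_mul, derivative_sub] <;> norm_num)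
        (by simp [ψ₂, E1, E2, E3, A, B, Cc, derivative_mul, derivative_sub] <;> norm_num)
        (by simp [ψ₂, E1, E2, E3, A, B, Cc, derivative_mul, derivative_sub] <;> norm_num)
        (by simp [ψ₂, E1, E2, E3, A, B, Cc, derivative_mul, derivative_sub] <;> norm_num)
  · -- part (ii): ε₂ε₃ε₄ is a square
    obtain ⟨ζ, hζ⟩ := IsCyclotomicExtension.exists_isPrimitiveRoot ℚ (B := K) (S := Set.univ)
      (n := 4) (Set.mem_univ _) (by norm_num)
    have h4 : ζ ^ 4 = 1 := by simpa using hζ.pow_eq_one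
    have h2 : ζ ^ 2 ≠ 1 := by
      have := hζ.pow_ne_one_of_pos_of_lt (l := 2) (by norm_num) (by norm_num)
      simpa using this
    have hi : (ζ ^ 2) = -1 := by
      have hfac : (ζ ^ 2 - 1) * (ζ ^ 2 + 1) = 0 := by linear_combination h4
      rcases mul_eq_zero.mp hfac with h | h
      · exact absurd (by linear_combination h) h2
      · linear_combination h
    set j : RatFunc3 K := algebraMap (R K) (RatFunc3 K) (MvPolynomial.C ζ) with hj
    have hj2 : j ^ 2 = -1 := by
      rw [hj, ← map_pow, ← map_pow, hi]
      simp
    set M : RatFunc3 K := va K * vb K * vc K * (vb K - 1) * (va K - vb K * vc K) *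
      (va K - vb K ^ 2 * vc K) with hM
    have hid : eps2 K * eps3 K * eps4 K = (j * M) * (j * M) := by
      have : eps2 K * eps3 K * eps4 K = -(M * M) := by
        simp only [eps2, eps3, eps4, hM]
        ring
      rw [this]
      have : (j * M) * (j * M) = j ^ 2 * (M * M) := by ring
      rw [this, hj2]
      ring
    exact ⟨algebraMap (RatFunc3 K) L (j * M), by rw [hid, map_mul]⟩
  · -- part (iii): abc = s² · bc
    exact ⟨s, by rw [hs, ← map_mul, mul_assoc]⟩
  · -- abc nonsquare
    exact case_L K L s hs hrank ha _ (A * B * Cc)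
      (by simp only [va, vb, vc, A, B, Cc, map_mul]) ψ₁ ψ₁ 0 0
      (by simp [ψ₁, A, B, Cc, derivative_mul] <;> norm_num)
      (by simp [ψ₁, A, B, Cc, derivative_mul] <;> norm_num)
      (by simp [ψ₁, A, B, Cc, derivative_mul] <;> norm_num)
      (by simp [ψ₁, A, B, Cc, derivative_mul] <;> norm_num)
  · exact case_L K L s hs hrank ha _ E2
      (by simp only [eps2, va, vb, vc, E2, A, B, Cc, map_mul, map_sub, map_one])
      ψ₂ ψ₂ 0 2
      (by simp [ψ₂, E2, A, B, Cc, derivative_mul, derivative_sub] <;> norm_num)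
      (by simp [ψ₂, E2, A, B, Cc, derivative_mul, derivative_sub] <;> norm_num)
      (by simp [ψ₂, E2, A, B, Cc, derivative_mul, derivative_sub] <;> norm_num)
      (by simp [ψ₂, E2, A, B, Cc, derivative_mul, derivative_sub] <;> norm_num)
  · exact case_L K L s hs hrank ha _ E3
      (by simp only [eps3, va, vb, vc, E3, A, B, Cc, map_mul, map_sub, map_one, map_pow])
      ψ₂ ψ₂ 0 4
      (by simp [ψ₂, E3, A, B, Cc, derivative_mul, derivative_sub] <;> norm_num)
      (by simp [ψ₂, E3, A, B, Cc, derivative_mul, derivative_sub] <;> norm_num)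
      (by simp [ψ₂, E3, A, B, Cc, derivative_mul, derivative_sub] <;> norm_num)
      (by simp [ψ₂, E3, A, B, Cc, derivative_mul, derivative_sub] <;> norm_num)
  · exact case_L K L s hs hrank ha _ E4
      (by simp only [eps4, va, vb, vc, E4, A, B, Cc, map_mul, map_sub, map_one, map_pow])
      ψ₂ ψ₂ 2 0
      (by simp [ψ₂, E4, A, B, Cc, derivative_mul, derivative_sub] <;> norm_num)
      (by simp [ψ₂, E4, A, B, Cc, derivative_mul, derivative_sub] <;> norm_num)
      (by simp [ψ₂, E4, A, B, Cc, derivative_mul, derivative_sub] <;> norm_num)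
      (by simp [ψ₂, E4, A, B, Cc, derivative_mul, derivative_sub] <;> norm_num)

end
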